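/- Let G be a finite group with a unitary representation U on ℂ^d and twirling operation 𝒢. Let L ≥ 1 and let Q : Fin L → (d×d matrices) be a family of Hermitian idempotent matrices with Q_l Q_{l'} = 0 for l ≠ l', Q_l U_g = U_g Q_l for all g ∈ G and l, and such that for all l ≠ l' and every d×d matrix X, 𝒢(Q_l X Q_{l'}) = 0 (the multiplicity-free condition: distinct Q_l project onto sums of mutually inequivalent irreducible components). Let ψ_l ∈ ℂ^d for l ∈ Fin L, let ζ = exp(2πi/L), and for each l ∈ Fin L define φ_l = (1/L) Σ_{l'∈Fin L} ζ^{−l'·l} Q_{l'} ψ_{l'} ∈ ℂ^d (the exponent being the product of the indices as integers). Let σ̄ = (1/L) Σ_{l'∈Fin L} Q_{l'} 𝒢(ψ_{l'} ψ_{l'}†) Q_{l'}. Then (1/|G|) Σ_{g∈G} Σ_{l∈Fin L} (U_g φ_l φ_l† U_g†) ⊗ e_{ll} = σ̄ ⊗ ((1/L) • 1_L), where e_{ll} is the L×L matrix with a single 1 in position (l,l), 1_L is the L×L identity, and ⊗ is the Kronecker product. -/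

import Mathlib

open scoped BigOperators Kronecker ComplexOrder
open Matrix

/-- von Neumann entropy of a matrix (via eigenvalues when Hermitian, else 0). -/
noncomputable def vnEntropy {ι : Type*} [Fintype ι] [DecidableEq ι]
    (ρ : Matrix ι ι ℂ) : ℝ :=
  if h : ρ.IsHermitian then -∑ i, h.eigenvalues i * Real.log (h.eigenvalues i) else 0

/-- Twirling operation induced by a family of matrices indexed by a finite group. -/
noncomputable def twirl {G ι : Type*} [Fintype G] [Fintype ι]
    (U : G → Matrix ι ι ℂ) (X : Matrix ι ι ℂ) : Matrix ι ι ℂ :=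
  (Fintype.card G : ℂ)⁻¹ • ∑ g, U g * X * (U g)ᴴ

/-- Apply a real function spectrally to a Hermitian matrix (0 otherwise). -/
noncomputable def matFun {ι : Type*} [Fintype ι] [DecidableEq ι]
    (f : ℝ → ℝ) (ρ : Matrix ι ι ℂ) : Matrix ι ι ℂ :=
  if h : ρ.IsHermitian then
    (h.eigenvectorUnitary : Matrix ι ι ℂ) *
      Matrix.diagonal (fun i => (f (h.eigenvalues i) : ℂ)) *
      (star (h.eigenvectorUnitary : Matrix ι ι ℂ))
  else 0

/-- Spectral power `ρ ^ t` with the convention `0 ^ t = 0`. -/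
noncomputable def matPow {ι : Type*} [Fintype ι] [DecidableEq ι]
    (ρ : Matrix ι ι ℂ) (t : ℝ) : Matrix ι ι ℂ :=
  matFun (fun x => if x = 0 then 0 else x ^ t) ρ

/-- Spectral logarithm with the convention `log 0 = 0`. -/
noncomputable def matLog {ι : Type*} [Fintype ι] [DecidableEq ι]
    (ρ : Matrix ι ι ℂ) : Matrix ι ι ℂ :=
  matFun Real.log ρ

/-- Absolute value `|M| = √(MᴴM)`. -/
noncomputable def matAbs {ι : Type*} [Fintype ι] [DecidableEq ι]
    (M : Matrix ι ι ℂ) : Matrix ι ι ℂ :=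
  matPow (Mᴴ * M) (1/2 : ℝ)


/-- The averaged-state computation Eq. (C38) in the proof of Lemma 3: under the
multiplicity-free condition, the group average of the Fourier-rotated ensemble
equals a product state. -/
lemma twirl_sum {G ι κ : Type*} [Fintype G] [Fintype ι] (U : G → Matrix ι ι ℂ)
    (s : Finset κ) (f : κ → Matrix ι ι ℂ) :
    twirl U (∑ i ∈ s, f i) = ∑ i ∈ s, twirl U (f i) := by
  simp only [twirl, Finset.mul_sum, Finset.sum_mul, ← Finset.smul_sum]
  rw [Finset.sum_comm]

lemma twirl_smul {G ι : Type*} [Fintype G] [Fintype ι] (U : G → Matrix ι ι ℂ)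
    (c : ℂ) (X : Matrix ι ι ℂ) :
    twirl U (c • X) = c • twirl U X := by
  simp only [twirl, mul_smul_comm, smul_mul_assoc, ← Finset.smul_sum, smul_comm c]

lemma sum_kronecker {κ l m n p : Type*} [Fintype l] [Fintype m] [Fintype n] [Fintype p]
    (s : Finset κ) (f : κ → Matrix l m ℂ) (B : Matrix n p ℂ) :
    (∑ i ∈ s, f i) ⊗ₖ B = ∑ i ∈ s, (f i) ⊗ₖ B := by
  ext ⟨i, j⟩ ⟨k, r⟩
  simp [Matrix.kroneckerMap_apply, Matrix.sum_apply, Finset.sum_mul]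

lemma kronecker_sum {κ l m n p : Type*} [Fintype l] [Fintype m] [Fintype n] [Fintype p]
    (s : Finset κ) (A : Matrix l m ℂ) (f : κ → Matrix n p ℂ) :
    A ⊗ₖ (∑ i ∈ s, f i) = ∑ i ∈ s, A ⊗ₖ (f i) := by
  ext ⟨i, j⟩ ⟨k, r⟩
  simp [Matrix.kroneckerMap_apply, Matrix.sum_apply, Finset.mul_sum]

lemma sum_stdBasis_diag {L : ℕ} :
    ∑ l : Fin L, Matrix.single l l (1 : ℂ) = 1 := by
  ext i j
  simp only [Matrix.sum_apply, Matrix.single, Matrix.of_apply, Matrix.one_apply]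
  by_cases h : i = j
  · subst h; rw [Finset.sum_eq_single i] <;> simp +contextual
  · rw [if_neg h, Finset.sum_eq_zero]
    intro x _
    rcases eq_or_ne x i with rfl | hx
    · simp [h]
    · simp [hx]

lemma vecMulVec_mulVec_vecMul {n : Type*} [Fintype n] (A B : Matrix n n ℂ) (u w : n → ℂ) :
    Matrix.vecMulVec (A *ᵥ u) (w ᵥ* B) = A * Matrix.vecMulVec u w * B := by
  ext i j
  simp only [Matrix.vecMulVec_apply, Matrix.mul_apply, Matrix.mulVec, Matrix.vecMul,
    dotProduct, Finset.sum_mul, Finset.mul_sum]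
  exact Finset.sum_congr rfl fun k _ => Finset.sum_congr rfl fun m _ => by ring

theorem averaged_state_eq_product
    {G : Type*} [Group G] [Fintype G] {d : ℕ}
    (U : G → Matrix (Fin d) (Fin d) ℂ)
    (hU : ∀ g, U g ∈ Matrix.unitaryGroup (Fin d) ℂ)
    (hU1 : U 1 = 1) (hUmul : ∀ g g', U (g * g') = U g * U g')
    (L : ℕ) (hL : 1 ≤ L)
    (Q : Fin L → Matrix (Fin d) (Fin d) ℂ)
    (hQherm : ∀ l, (Q l).IsHermitian)
    (hQidem : ∀ l, Q l * Q l = Q l)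
    (hQorth : ∀ l l', l ≠ l' → Q l * Q l' = 0)
    (hQcomm : ∀ l g, Q l * U g = U g * Q l)
    (hQmf : ∀ l l', l ≠ l' → ∀ X : Matrix (Fin d) (Fin d) ℂ,
      twirl U (Q l * X * Q l') = 0)
    (ψ : Fin L → Fin d → ℂ)
    (ζ : ℂ) (hζ : ζ = Complex.exp (2 * Real.pi * Complex.I / L))
    (φ : Fin L → Fin d → ℂ)
    (hφ : ∀ l, φ l =
      (L : ℂ)⁻¹ • ∑ l' : Fin L,
        (ζ ^ (-((l' : ℕ) * (l : ℕ) : ℤ))) • (Q l').mulVec (ψ l'))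
    (σbar : Matrix (Fin d) (Fin d) ℂ)
    (hσbar : σbar =
      (L : ℂ)⁻¹ • ∑ l' : Fin L,
        Q l' * twirl U (Matrix.vecMulVec (ψ l') (star (ψ l'))) * Q l') :
    (Fintype.card G : ℂ)⁻¹ •
        ∑ g, ∑ l : Fin L,
          (U g * Matrix.vecMulVec (φ l) (star (φ l)) * (U g)ᴴ) ⊗ₖ
            Matrix.single l l (1 : ℂ)
      = σbar ⊗ₖ ((L : ℂ)⁻¹ • (1 : Matrix (Fin L) (Fin L) ℂ)) := by
  classical
  set c : Fin L → Fin L → ℂ := fun a l => ζ ^ (-((a : ℕ) * (l : ℕ) : ℤ)) with hc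
  have hζne : ζ ≠ 0 := by rw [hζ]; exact Complex.exp_ne_zero _
  -- conj ζ = ζ⁻¹
  have hconjζ : (starRingEnd ℂ) ζ = ζ⁻¹ := by
    rw [hζ, ← Complex.exp_conj, ← Complex.exp_neg]
    congr 1
    rw [map_div₀]
    simp [Complex.conj_I, Complex.conj_ofNat]
    ring
  have hcc : ∀ a l : Fin L, c a l * (starRingEnd ℂ) (c a l) = 1 := by
    intro a l
    simp only [hc, map_zpow₀, hconjζ, _root_.inv_zpow]
    exact mul_inv_cancel₀ (zpow_ne_zero _ hζne)
  -- Q commutes with (U g)ᴴ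
  have hQcommH : ∀ (a : Fin L) (g : G), Q a * (U g)ᴴ = (U g)ᴴ * Q a := by
    intro a g
    have h := congrArg Matrix.conjTranspose (hQcomm a g)
    simpa [Matrix.conjTranspose_mul, (hQherm a).eq] using h.symm
  -- twirl pulls out commuting projectors
  have htQ : ∀ (a : Fin L) (X : Matrix (Fin d) (Fin d) ℂ),
      twirl U (Q a * X * Q a) = Q a * twirl U X * Q a := by
    intro a X
    simp only [twirl, Finset.mul_sum, Finset.sum_mul, Matrix.mul_smul, Matrix.smul_mul]
    congr 1
    refine Finset.sum_congr rfl fun g _ => ?_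
    simp only [mul_assoc]
    rw [hQcommH a g, ← mul_assoc (U g) (Q a), ← hQcomm a g, mul_assoc]
  -- rewrite the cross terms
  have hterm : ∀ a b : Fin L,
      Matrix.vecMulVec ((Q a) *ᵥ ψ a) (star ((Q b) *ᵥ ψ b))
        = Q a * Matrix.vecMulVec (ψ a) (star (ψ b)) * Q b := by
    intro a b
    rw [Matrix.star_mulVec, (hQherm b).eq, vecMulVec_mulVec_vecMul]
  -- expansion of the rank-one projector
  have hexp : ∀ l : Fin L, Matrix.vecMulVec (φ l) (star (φ l))
      = (L : ℂ)⁻¹ • (L : ℂ)⁻¹ • ∑ a : Fin L, ∑ b : Fin L,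
          (c a l * (starRingEnd ℂ) (c b l)) •
            (Q a * Matrix.vecMulVec (ψ a) (star (ψ b)) * Q b) := by
    intro l
    simp only [← hterm]
    ext i j
    simp only [Matrix.vecMulVec_apply, hφ l, Pi.smul_apply, Pi.star_apply, Finset.sum_apply,
      smul_eq_mul, Matrix.smul_apply, Matrix.sum_apply, Complex.star_def, _root_.map_mul, map_sum,
      map_inv₀, map_natCast, hc]
    rw [mul_mul_mul_comm, Finset.sum_mul_sum, mul_assoc]
    congr 1
    congr 1
    exact Finset.sum_congr rfl fun a _ => Finset.sum_congr rfl fun b _ => by ring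
  -- the key computation: the twirled rank-one state is the same for every l
  have hkey : ∀ l : Fin L,
      twirl U (Matrix.vecMulVec (φ l) (star (φ l))) = (L : ℂ)⁻¹ • σbar := by
    intro l
    rw [hexp l, twirl_smul, twirl_smul, twirl_sum]
    have hinner : ∀ a : Fin L,
        twirl U (∑ b : Fin L, (c a l * (starRingEnd ℂ) (c b l)) •
            (Q a * Matrix.vecMulVec (ψ a) (star (ψ b)) * Q b))
          = Q a * twirl U (Matrix.vecMulVec (ψ a) (star (ψ a))) * Q a := by
      intro a
      rw [twirl_sum]
      rw [Finset.sum_eq_single a]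
      · rw [twirl_smul, htQ, hcc, one_smul]
      · intro b _ hb
        rw [twirl_smul, hQmf a b (Ne.symm hb), smul_zero]
      · simp
    rw [Finset.sum_congr rfl fun a _ => hinner a, hσbar]
  -- assemble
  rw [Finset.sum_comm, Finset.smul_sum]
  have hLHS : ∀ l : Fin L,
      (Fintype.card G : ℂ)⁻¹ •
          ∑ g, (U g * Matrix.vecMulVec (φ l) (star (φ l)) * (U g)ᴴ) ⊗ₖ
            Matrix.single l l (1 : ℂ)
        = ((L : ℂ)⁻¹ • σbar) ⊗ₖ Matrix.single l l (1 : ℂ) := by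
    intro l
    rw [← sum_kronecker, ← Matrix.smul_kronecker, ← twirl, hkey l]
  rw [Finset.sum_congr rfl fun l _ => hLHS l]
  simp only [Matrix.smul_kronecker]
  rw [← Finset.smul_sum, ← kronecker_sum, sum_stdBasis_diag, ← Matrix.kronecker_smul]
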